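/- Let j ≥ 2, let k₁, …, k_j ≥ 2, let A_{k_i} be real n × n^{k_i−1} matrices with vector fields f_{k_i}(x) = A_{k_i} x^{[k_i−1]}, and let g(x) = C x for a real m × n matrix C. Then for every x ∈ ℝⁿ, L_{f_{k_j}} ⋯ L_{f_{k₂}} L_{f_{k₁}} g(x) = C A_{k₁} B_{k₂k₁} B_{k₃k₂k₁} ⋯ B_{k_j ⋯ k₂k₁} x^{[k₁+⋯+k_j − (2j−1)]}, where for each 2 ≤ p ≤ j, B_{k_p ⋯ k₂k₁} = Σ_{i=1}^{N_p} I ⊗ ⋯ ⊗ A_{k_p} ⊗ ⋯ ⊗ I with N_p = k₁+⋯+k_{p−1} − (2p−3), the i-th summand being a Kronecker product of N_p factors in which A_{k_p} occupies the i-th factor and all other factors are the n × n identity matrix I. -/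

import Mathlib

open Matrix BigOperators

noncomputable section

/-- Kronecker product of (column) vectors. -/
def vkron {a b : ℕ} (u : Fin a → ℝ) (v : Fin b → ℝ) : Fin (a * b) → ℝ :=
  fun i => u (finProdFinEquiv.symm i).1 * v (finProdFinEquiv.symm i).2

/-- Cast a vector along an equality of dimensions. -/
def castV {a b : ℕ} (h : a = b) (v : Fin a → ℝ) : Fin b → ℝ :=
  fun i => v (Fin.cast h.symm i)

/-- `vpow x m = x ⊗ x ⊗ ⋯ ⊗ x` (`m` factors), the `m`-fold Kronecker power. -/
def vpow {n : ℕ} (x : Fin n → ℝ) : (m : ℕ) → Fin (n ^ m) → ℝ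
  | 0 => fun _ => 1
  | m + 1 => castV (pow_succ' n m).symm (vkron x (vpow x m))

/-- Kronecker product of matrices. -/
def mkron {a b c d : ℕ} (A : Matrix (Fin a) (Fin b) ℝ) (B : Matrix (Fin c) (Fin d) ℝ) :
    Matrix (Fin (a * c)) (Fin (b * d)) ℝ :=
  fun i j =>
    A (finProdFinEquiv.symm i).1 (finProdFinEquiv.symm j).1 *
      B (finProdFinEquiv.symm i).2 (finProdFinEquiv.symm j).2

/-- Cast a matrix along equalities of dimensions. -/
def castM {a b a' b' : ℕ} (ha : a = a') (hb : b = b')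
    (M : Matrix (Fin a) (Fin b) ℝ) : Matrix (Fin a') (Fin b') ℝ :=
  fun i j => M (Fin.cast ha.symm i) (Fin.cast hb.symm j)

/-- `Bmat k N hk A = Σ_{i=1}^{N} I^{⊗(i-1)} ⊗ A ⊗ I^{⊗(N-i)}`, where `A` is `n × n^(k-1)`
and `I` is the `n × n` identity; the result is an `n^N × n^(N+k-2)` matrix. -/
def Bmat {n : ℕ} (k N : ℕ) (hk : 2 ≤ k) (A : Matrix (Fin n) (Fin (n ^ (k - 1))) ℝ) :
    Matrix (Fin (n ^ N)) (Fin (n ^ (N + k - 2))) ℝ :=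
  ∑ i : Fin N,
    castM (by have := i.isLt; rw [← pow_succ', ← pow_add]; congr 1; omega)
      (by have := i.isLt; have := hk; rw [← pow_add, ← pow_add]; congr 1; omega)
      (mkron (1 : Matrix (Fin (n ^ (i : ℕ))) (Fin (n ^ (i : ℕ))) ℝ)
        (mkron A (1 : Matrix (Fin (n ^ (N - 1 - (i : ℕ)))) (Fin (n ^ (N - 1 - (i : ℕ)))) ℝ)))

/-- Lie derivative of an output map along a vector field. -/
def lieD {n m : ℕ} (f : (Fin n → ℝ) → Fin n → ℝ) (φ : (Fin n → ℝ) → Fin m → ℝ) :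
    (Fin n → ℝ) → Fin m → ℝ :=
  fun x => fderiv ℝ φ x (f x)

/-- Iterated Lie derivative `L_f^j φ`. -/
def lieIter {n m : ℕ} (f : (Fin n → ℝ) → Fin n → ℝ) (φ : (Fin n → ℝ) → Fin m → ℝ) :
    ℕ → (Fin n → ℝ) → Fin m → ℝ
  | 0 => φ
  | j + 1 => lieD f (lieIter f φ j)

/-- The product `B_{k₂k₁} B_{k₃k₂k₁} ⋯ B_{k_{p+1}⋯k₂k₁}`, as an
`n^(k₁-1) × n^(k₁+⋯+k_{p+1}-(2(p+1)-1))` matrix (`Mchain k hk A 0` is the empty product);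
indices here are 0-based, so `k 0 = k₁`, `k 1 = k₂`, …. -/
def Mchain {n : ℕ} (k : ℕ → ℕ) (hk : ∀ i, 2 ≤ k i)
    (A : (i : ℕ) → Matrix (Fin n) (Fin (n ^ (k i - 1))) ℝ) :
    (p : ℕ) → Matrix (Fin (n ^ (k 0 - 1)))
      (Fin (n ^ ((∑ t ∈ Finset.range (p + 1), k t) - (2 * (p + 1) - 1)))) ℝ
  | 0 => castM rfl (by congr 1)
      (1 : Matrix (Fin (n ^ (k 0 - 1))) (Fin (n ^ (k 0 - 1))) ℝ)
  | p + 1 =>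
      castM rfl
        (by
          congr 1
          have h2 : (∑ t ∈ Finset.range (p + 1 + 1), k t) =
              (∑ t ∈ Finset.range (p + 1), k t) + k (p + 1) :=
            Finset.sum_range_succ k (p + 1)
          have h3 : 2 * (p + 1) ≤ ∑ t ∈ Finset.range (p + 1), k t := by
            calc 2 * (p + 1) = ∑ _t ∈ Finset.range (p + 1), 2 := by
                  rw [Finset.sum_const, Finset.card_range]; ring
              _ ≤ ∑ t ∈ Finset.range (p + 1), k t := Finset.sum_le_sum fun i _ => hk i
          have h4 := hk (p + 1)
          omega)
        (Mchain k hk A p *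
          Bmat (k (p + 1)) ((∑ t ∈ Finset.range (p + 1), k t) - (2 * (p + 1) - 1))
            (hk (p + 1)) (A (p + 1)))

/-- The iterated mixed Lie derivative `L_{F(j-1)} ⋯ L_{F 1} L_{F 0} g`. -/
def mLieN {n m : ℕ} (F : ℕ → (Fin n → ℝ) → Fin n → ℝ) (g : (Fin n → ℝ) → Fin m → ℝ) :
    ℕ → (Fin n → ℝ) → Fin m → ℝ
  | 0 => g
  | p + 1 => lieD (F p) (mLieN F g p)

def vget {a : ℕ} (v : Fin a → ℝ) (i : ℕ) : ℝ := if h : i < a then v ⟨i, h⟩ else 0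

def mget {a b : ℕ} (M : Matrix (Fin a) (Fin b) ℝ) (i j : ℕ) : ℝ :=
  if h : i < a ∧ j < b then M ⟨i, h.1⟩ ⟨j, h.2⟩ else 0

lemma vget_fin {a : ℕ} (v : Fin a → ℝ) (i : Fin a) : vget v (i : ℕ) = v i := by
  simp [vget, i.isLt]

lemma vget_of_ge {a : ℕ} (v : Fin a → ℝ) {i : ℕ} (h : a ≤ i) : vget v i = 0 := by
  simp [vget, Nat.not_lt.2 h]

lemma vext {a : ℕ} {u v : Fin a → ℝ} (h : ∀ t : ℕ, vget u t = vget v t) : u = v := by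
  funext i
  have := h i
  rwa [vget_fin, vget_fin] at this

lemma vget_castV {a b : ℕ} (h : a = b) (v : Fin a → ℝ) (t : ℕ) :
    vget (castV h v) t = vget v t := by
  subst h; rfl

lemma mget_castM {a b a' b' : ℕ} (ha : a = a') (hb : b = b')
    (M : Matrix (Fin a) (Fin b) ℝ) (i j : ℕ) :
    mget (castM ha hb M) i j = mget M i j := by
  subst ha; subst hb; rfl

lemma vget_vkron {a b : ℕ} (u : Fin a → ℝ) (v : Fin b → ℝ) (t : ℕ) :
    vget (vkron u v) t = vget u (t / b) * vget v (t % b) := by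
  rcases Nat.eq_zero_or_pos b with hb | hb
  · subst hb
    rw [vget_of_ge _ (by omega), vget_of_ge (a := 0) v (by omega), mul_zero]
  · by_cases ht : t < a * b
    · have h1 : t / b < a := Nat.div_lt_of_lt_mul (by rwa [mul_comm] at ht)
      have h2 : t % b < b := Nat.mod_lt _ hb
      rw [vget, dif_pos ht]
      show vkron u v ⟨t, ht⟩ = _
      rw [vkron]
      have d1 : ((finProdFinEquiv.symm ⟨t, ht⟩).1 : ℕ) = t / b := Fin.coe_divNat _
      have d2 : ((finProdFinEquiv.symm ⟨t, ht⟩).2 : ℕ) = t % b := Fin.coe_modNat _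
      rw [show (finProdFinEquiv.symm ⟨t, ht⟩).1 = (⟨t / b, h1⟩ : Fin a) from Fin.ext d1,
        show (finProdFinEquiv.symm ⟨t, ht⟩).2 = (⟨t % b, h2⟩ : Fin b) from Fin.ext d2,
        vget, dif_pos h1, vget, dif_pos h2]
    · have h1 : a ≤ t / b := Nat.le_div_iff_mul_le hb |>.2 (by omega)
      rw [vget_of_ge _ (by omega), vget_of_ge u h1, zero_mul]

lemma mget_of_ge_row {a b : ℕ} (M : Matrix (Fin a) (Fin b) ℝ) {i : ℕ} (j : ℕ) (h : a ≤ i) :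
    mget M i j = 0 := by
  simp only [mget]; rw [dif_neg]; omega

lemma mget_of_ge_col {a b : ℕ} (M : Matrix (Fin a) (Fin b) ℝ) (i : ℕ) {j : ℕ} (h : b ≤ j) :
    mget M i j = 0 := by
  simp only [mget]; rw [dif_neg]; omega

lemma mget_mkron {a b c d : ℕ} (A : Matrix (Fin a) (Fin b) ℝ) (B : Matrix (Fin c) (Fin d) ℝ)
    (i j : ℕ) :
    mget (mkron A B) i j = mget A (i / c) (j / d) * mget B (i % c) (j % d) := by
  rcases Nat.eq_zero_or_pos c with hc | hc
  · subst hc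
    rw [mget_of_ge_row _ _ (by omega), mget_of_ge_row (a := 0) B _ (by omega), mul_zero]
  rcases Nat.eq_zero_or_pos d with hd | hd
  · subst hd
    rw [mget_of_ge_col _ _ (by omega), mget_of_ge_col (b := 0) B _ (by omega)]; simp
  by_cases hi : i < a * c
  · by_cases hj : j < b * d
    · have h1 : i / c < a := Nat.div_lt_of_lt_mul (by rwa [mul_comm] at hi)
      have h2 : j / d < b := Nat.div_lt_of_lt_mul (by rwa [mul_comm] at hj)
      have h3 : i % c < c := Nat.mod_lt _ hc
      have h4 : j % d < d := Nat.mod_lt _ hd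
      rw [mget, dif_pos ⟨hi, hj⟩]
      show mkron A B ⟨i, hi⟩ ⟨j, hj⟩ = _
      rw [mkron,
        show (finProdFinEquiv.symm ⟨i, hi⟩).1 = (⟨i / c, h1⟩ : Fin a) from Fin.ext (Fin.coe_divNat _),
        show (finProdFinEquiv.symm ⟨j, hj⟩).1 = (⟨j / d, h2⟩ : Fin b) from Fin.ext (Fin.coe_divNat _),
        show (finProdFinEquiv.symm ⟨i, hi⟩).2 = (⟨i % c, h3⟩ : Fin c) from Fin.ext (Fin.coe_modNat _),
        show (finProdFinEquiv.symm ⟨j, hj⟩).2 = (⟨j % d, h4⟩ : Fin d) from Fin.ext (Fin.coe_modNat _),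
        mget, dif_pos ⟨h1, h2⟩, mget, dif_pos ⟨h3, h4⟩]
    · have h2 : b ≤ j / d := Nat.le_div_iff_mul_le hd |>.2 (by omega)
      rw [mget_of_ge_col _ _ (by omega), mget_of_ge_col A _ h2, zero_mul]
  · have h1 : a ≤ i / c := Nat.le_div_iff_mul_le hc |>.2 (by omega)
    rw [mget_of_ge_row _ _ (by omega), mget_of_ge_row A _ h1, zero_mul]

lemma vget_mulVec {a b : ℕ} (M : Matrix (Fin a) (Fin b) ℝ) (v : Fin b → ℝ) (t : ℕ) :
    vget (M.mulVec v) t = ∑ j ∈ Finset.range b, mget M t j * vget v j := by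
  by_cases ht : t < a
  · rw [vget, dif_pos ht]
    show M.mulVec v ⟨t, ht⟩ = _
    rw [Matrix.mulVec, dotProduct]
    rw [Finset.sum_range fun j => mget M t j * vget v j]
    apply Finset.sum_congr rfl
    intro j _
    rw [mget, dif_pos ⟨ht, j.isLt⟩, vget_fin]
  · rw [vget_of_ge _ (by omega)]
    symm
    apply Finset.sum_eq_zero
    intro j _
    rw [mget_of_ge_row _ _ (by omega), zero_mul]

lemma vget_vpow_succ {n : ℕ} (x : Fin n → ℝ) (m : ℕ) (t : ℕ) :
    vget (vpow x (m + 1)) t = vget x (t / n ^ m) * vget (vpow x m) (t % n ^ m) := by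
  rw [vpow, vget_castV, vget_vkron]

lemma vget_vpow_zero {n : ℕ} (x : Fin n → ℝ) (t : ℕ) :
    vget (vpow x 0) t = if t = 0 then 1 else 0 := by
  have h1 : n ^ 0 = 1 := pow_zero n
  rcases t with _ | t
  · rw [vget, dif_pos (by omega), if_pos rfl]; rfl
  · rw [vget_of_ge _ (by omega), if_neg (by omega)]

lemma vget_vpow_add {n : ℕ} (x : Fin n → ℝ) (a b t : ℕ) :
    vget (vpow x (a + b)) t = vget (vpow x a) (t / n ^ b) * vget (vpow x b) (t % n ^ b) := by
  induction a generalizing t with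
  | zero =>
    rw [Nat.zero_add]
    rcases Nat.eq_zero_or_pos (n ^ b) with hb | hb
    · rw [vget_of_ge _ (by omega), vget_of_ge (a := n ^ b) _ (by rw [hb]; omega), mul_zero]
    · by_cases ht : t < n ^ b
      · rw [Nat.div_eq_of_lt ht, Nat.mod_eq_of_lt ht, vget_vpow_zero, if_pos rfl, one_mul]
      · rw [vget_of_ge _ (by omega), vget_vpow_zero,
          if_neg (by have := Nat.div_pos (le_of_not_gt ht) hb; omega), zero_mul]
  | succ a ih =>
    have e1 : a + 1 + b = (a + b) + 1 := by omega
    rw [e1, vget_vpow_succ, ih, vget_vpow_succ]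
    have hd : t / n ^ b / n ^ a = t / n ^ (a + b) := by
      rw [Nat.div_div_eq_div_mul, ← pow_add, Nat.add_comm b a]
    have hm1 : t / n ^ b % n ^ a = t % n ^ (a + b) / n ^ b := by
      rw [← Nat.mod_mul_right_div_self, ← pow_add, Nat.add_comm b a]
    have hm2 : t % n ^ b = t % n ^ (a + b) % n ^ b := by
      rw [Nat.mod_mod_of_dvd _ (pow_dvd_pow n (by omega))]
    rw [hd, hm1, hm2, mul_assoc]

lemma castV_rfl {a : ℕ} (h : a = a) (v : Fin a → ℝ) : castV h v = v := rfl

lemma castM_rfl {a b : ℕ} (h : a = a) (h2 : b = b) (M : Matrix (Fin a) (Fin b) ℝ) :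
    castM h h2 M = M := rfl

lemma vpow_cast {n : ℕ} (x : Fin n → ℝ) {a b : ℕ} (hab : a = b) (h : n ^ a = n ^ b) :
    castV h (vpow x a) = vpow x b := by subst hab; rfl

/-- Splitting a Kronecker power into three factors. -/
lemma vpow_split3 {n : ℕ} (x : Fin n → ℝ) {e a b c : ℕ} (h2 : e = a + (b + c))
    (h : n ^ e = n ^ a * (n ^ b * n ^ c)) :
    castV h (vpow x e) = vkron (vpow x a) (vkron (vpow x b) (vpow x c)) := by
  subst h2
  apply vext
  intro t
  rw [vget_castV, vget_vpow_add, vget_vkron, vget_vkron, vget_vpow_add]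
  have e1 : n ^ (b + c) = n ^ b * n ^ c := pow_add n b c
  rw [e1]

/-- Mixed product property. -/
lemma mkron_mulVec {a b c d : ℕ} (P : Matrix (Fin a) (Fin b) ℝ) (Q : Matrix (Fin c) (Fin d) ℝ)
    (u : Fin b → ℝ) (v : Fin d → ℝ) :
    (mkron P Q).mulVec (vkron u v) = vkron (P.mulVec u) (Q.mulVec v) := by
  funext i
  rw [Matrix.mulVec, dotProduct, ← Equiv.sum_comp finProdFinEquiv
    (fun j => mkron P Q i j * vkron u v j), vkron]
  show _ = (∑ j1 : Fin b, P _ j1 * u j1) * (∑ j2 : Fin d, Q _ j2 * v j2)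
  rw [Finset.sum_mul_sum, Fintype.sum_prod_type]
  apply Finset.sum_congr rfl; intro j1 _
  apply Finset.sum_congr rfl; intro j2 _
  rw [mkron, vkron, Equiv.symm_apply_apply]
  ring

lemma castM_mulVec {a b a' b' : ℕ} (ha : a = a') (hb : b = b')
    (M : Matrix (Fin a) (Fin b) ℝ) (w : Fin b' → ℝ) :
    (castM ha hb M).mulVec w = castV ha (M.mulVec (castV hb.symm w)) := by
  subst ha; subst hb; rfl

lemma mul_castM {a b c c' : ℕ} (hc : c = c') (M : Matrix (Fin a) (Fin b) ℝ)
    (N : Matrix (Fin b) (Fin c) ℝ) :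
    M * castM rfl hc N = castM rfl hc (M * N) := by
  subst hc; rfl

lemma sum_mulVec {ι : Type*} (s : Finset ι) {a b : ℕ} (F : ι → Matrix (Fin a) (Fin b) ℝ)
    (v : Fin b → ℝ) :
    (∑ i ∈ s, F i).mulVec v = ∑ i ∈ s, (F i).mulVec v := by
  induction s using Finset.cons_induction with
  | empty => simp [Matrix.mulVec, dotProduct]
  | cons i s hi ih => rw [Finset.sum_cons, Finset.sum_cons, Matrix.add_mulVec, ih]

lemma vget_sum {ι : Type*} (s : Finset ι) {a : ℕ} (F : ι → (Fin a → ℝ)) (t : ℕ) :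
    vget (∑ i ∈ s, F i) t = ∑ i ∈ s, vget (F i) t := by
  induction s using Finset.cons_induction with
  | empty => simp [vget]
  | cons i s hi ih =>
    rw [Finset.sum_cons, Finset.sum_cons, ← ih]
    by_cases h : t < a
    · simp [vget, dif_pos h]
    · simp [vget, dif_neg h]

def vkronL1 {a b : ℕ} (w : Fin b → ℝ) : (Fin a → ℝ) →L[ℝ] (Fin (a * b) → ℝ) :=
  LinearMap.toContinuousLinearMap
    { toFun := fun u => vkron u w
      map_add' := by intro u v; funext i; simp [vkron, add_mul]
      map_smul' := by intro c u; funext i; simp [vkron, mul_assoc] }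

def vkronL2 {a b : ℕ} (u : Fin a → ℝ) : (Fin b → ℝ) →L[ℝ] (Fin (a * b) → ℝ) :=
  LinearMap.toContinuousLinearMap
    { toFun := fun w => vkron u w
      map_add' := by intro w v; funext i; simp [vkron, mul_add]
      map_smul' := by intro c w; funext i; simp [vkron]; ring }

def castVL {a b : ℕ} (h : a = b) : (Fin a → ℝ) →L[ℝ] (Fin b → ℝ) :=
  LinearMap.toContinuousLinearMap
    { toFun := castV h
      map_add' := by intro u v; rfl
      map_smul' := by intro c u; rfl }

def Lv {n : ℕ} (x : Fin n → ℝ) : (m : ℕ) → ((Fin n → ℝ) →L[ℝ] (Fin (n ^ m) → ℝ))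
  | 0 => 0
  | m + 1 => (castVL (pow_succ' n m).symm).comp
      (vkronL1 (vpow x m) + (vkronL2 x).comp (Lv x m))

lemma Lv_zero_apply {n : ℕ} (x v : Fin n → ℝ) : Lv x 0 v = 0 := rfl

lemma Lv_succ_apply {n : ℕ} (x v : Fin n → ℝ) (m : ℕ) :
    Lv x (m + 1) v = castV (pow_succ' n m).symm
      (vkron v (vpow x m) + vkron x (Lv x m v)) := rfl

lemma hasFDerivAt_vpow {n : ℕ} (x : Fin n → ℝ) (m : ℕ) :
    HasFDerivAt (fun y => vpow y m) (Lv x m) x := by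
  induction m with
  | zero => exact hasFDerivAt_const _ x
  | succ m ih =>
    rw [hasFDerivAt_pi']
    intro i
    set i' : Fin (n * n ^ m) := Fin.cast (pow_succ' n m) i with hi'
    have h1 := (hasFDerivAt_pi' (𝕜 := ℝ)).1 (hasFDerivAt_id (𝕜 := ℝ) x) i'.divNat
    have h2 := (hasFDerivAt_pi' (𝕜 := ℝ)).1 ih i'.modNat
    have key : HasFDerivAt (fun y => vpow y (m + 1) i) _ x := h1.mul h2
    refine key.congr_fderiv (Eq.symm ?_)
    refine ContinuousLinearMap.ext fun v => ?_
    show Lv x (m + 1) v i = _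
    rw [Lv_succ_apply]
    show vkron v (vpow x m) i' + vkron x (Lv x m v) i' = _
    simp only [vkron, ContinuousLinearMap.add_apply, ContinuousLinearMap.smul_apply,
      ContinuousLinearMap.coe_comp', Function.comp_apply, ContinuousLinearMap.coe_id',
      id_eq, ContinuousLinearMap.proj_apply, smul_eq_mul]
    show v i'.divNat * vpow x m i'.modNat + x i'.divNat * Lv x m v i'.modNat = _
    show _ = x i'.divNat * Lv x m v i'.modNat + vpow x m i'.modNat * v i'.divNat
    ring

lemma vget_add {a : ℕ} (u w : Fin a → ℝ) (t : ℕ) :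
    vget (u + w) t = vget u t + vget w t := by
  by_cases h : t < a <;> simp [vget, h]

lemma pow_mod_mod {n a b t : ℕ} (h : a ≤ b) : t % n ^ b % n ^ a = t % n ^ a :=
  Nat.mod_mod_of_dvd _ (pow_dvd_pow n h)

lemma pow_div_div {n a b c t : ℕ} (h : a + c = b) : t / n ^ c / n ^ a = t / n ^ b := by
  rw [Nat.div_div_eq_div_mul, ← pow_add, Nat.add_comm c a, h]

lemma pow_div_mod {n a b c t : ℕ} (h : a + c = b) : t / n ^ c % n ^ a = t % n ^ b / n ^ c := by
  rw [← Nat.mod_mul_right_div_self, ← pow_add, Nat.add_comm c a, h]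

lemma mid_mod_eq {n N i t : ℕ} (hi : i < N) :
    t % n ^ N / n ^ (N - 1 - i) % n = t / n ^ (N - 1 - i) % n := by
  have h1 : t % n ^ N / n ^ (N - 1 - i) % n ^ 1 = t % n ^ N % n ^ (N - i) / n ^ (N - 1 - i) :=
    pow_div_mod (by omega)
  have h2 : t / n ^ (N - 1 - i) % n ^ 1 = t % n ^ (N - i) / n ^ (N - 1 - i) :=
    pow_div_mod (by omega)
  have h3 : t % n ^ N % n ^ (N - i) = t % n ^ (N - i) := pow_mod_mod (by omega)
  rw [pow_one] at h1 h2
  rw [h1, h3, h2]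

/-- The summand shared by both sides. -/
lemma Lv_get {n : ℕ} (x v : Fin n → ℝ) (N : ℕ) (t : ℕ) :
    vget (Lv x N v) t = ∑ i ∈ Finset.range N,
      vget (vpow x i) (t / n ^ (N - i)) *
        (vget v (t / n ^ (N - 1 - i) % n) *
          vget (vpow x (N - 1 - i)) (t % n ^ (N - 1 - i))) := by
  induction N generalizing t with
  | zero => rw [Lv_zero_apply]; simp [vget]
  | succ N ih =>
    rcases Nat.eq_zero_or_pos n with hn | hn
    · subst hn
      rw [Lv_succ_apply, vget_castV, vget_add, vget_vkron, vget_vkron]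
      have hv : ∀ s, vget v s = 0 := fun s => vget_of_ge v (by omega)
      have hx : ∀ s, vget x s = 0 := fun s => vget_of_ge x (by omega)
      rw [hv, hx, zero_mul, zero_mul, add_zero]
      symm
      apply Finset.sum_eq_zero
      intro i _
      rw [hv, zero_mul, mul_zero]
    · have hp : ∀ e : ℕ, 0 < n ^ e := fun e => pow_pos hn e
      rw [Lv_succ_apply, vget_castV, vget_add, vget_vkron, vget_vkron, ih,
        Finset.sum_range_succ', Finset.mul_sum, add_comm]
      congr 1
      · apply Finset.sum_congr rfl
        intro i hi
        have hiN : i < N := Finset.mem_range.1 hi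
        have e1 : N + 1 - (i + 1) = N - i := by omega
        have e2 : N + 1 - 1 - (i + 1) = N - 1 - i := by omega
        rw [e1, e2, vget_vpow_succ, pow_div_div (show i + (N - i) = N by omega),
          pow_div_mod (show i + (N - i) = N by omega),
          mid_mod_eq hiN, pow_mod_mod (show N - 1 - i ≤ N by omega)]
        ring
      · have e1 : N + 1 - 0 = N + 1 := by omega
        have e2 : N + 1 - 1 - 0 = N := by omega
        rw [e1, e2, vget_vpow_zero]
        by_cases ht : t < n ^ (N + 1)
        · rw [if_pos (Nat.div_eq_of_lt ht), one_mul]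
          have hlt : t / n ^ N < n := by
            rw [Nat.div_lt_iff_lt_mul (hp N)]
            have h2 : n ^ (N + 1) = n ^ N * n := pow_succ n N
            have h3 : n * n ^ N = n ^ N * n := Nat.mul_comm n (n ^ N)
            omega
          rw [Nat.mod_eq_of_lt hlt]
        · rw [if_neg (by
            have := Nat.div_pos (le_of_not_gt ht) (hp (N + 1)); omega), zero_mul]
          have hge : n ≤ t / n ^ N := by
            rw [Nat.le_div_iff_mul_le (hp N)]
            have h2 : n ^ (N + 1) = n ^ N * n := pow_succ n N
            have h3 : n * n ^ N = n ^ N * n := Nat.mul_comm n (n ^ N)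
            omega
          rw [vget_of_ge v hge, zero_mul]

lemma Bmat_mulVec {n : ℕ} (x : Fin n → ℝ) (k N : ℕ) (hk : 2 ≤ k)
    (A : Matrix (Fin n) (Fin (n ^ (k - 1))) ℝ) :
    (Bmat k N hk A).mulVec (vpow x (N + k - 2)) =
      Lv x N (A.mulVec (vpow x (k - 1))) := by
  apply vext
  intro t
  rw [Lv_get, Bmat, sum_mulVec, vget_sum,
    ← Fin.sum_univ_eq_sum_range (fun i => vget (vpow x i) (t / n ^ (N - i)) *
      (vget (A.mulVec (vpow x (k - 1))) (t / n ^ (N - 1 - i) % n) *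
        vget (vpow x (N - 1 - i)) (t % n ^ (N - 1 - i)))) N]
  apply Finset.sum_congr rfl
  intro i _
  rw [castM_mulVec,
    vpow_split3 x (show N + k - 2 = (i : ℕ) + ((k - 1) + (N - 1 - (i : ℕ))) by
      have := i.isLt; omega) _,
    mkron_mulVec, mkron_mulVec, Matrix.one_mulVec, Matrix.one_mulVec,
    vget_castV, vget_vkron, vget_vkron]
  have hQ : n * n ^ (N - 1 - (i : ℕ)) = n ^ (N - (i : ℕ)) := by
    rw [← pow_succ']
    congr 1
    have := i.isLt
    omega
  have hmid : t / n ^ (N - 1 - (i : ℕ)) % n = t % n ^ (N - (i : ℕ)) / n ^ (N - 1 - (i : ℕ)) := by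
    have h := pow_div_mod (n := n) (t := t) (a := 1) (c := N - 1 - (i : ℕ)) (b := N - (i : ℕ))
      (by have := i.isLt; omega)
    rwa [pow_one] at h
  rw [hQ, pow_mod_mod (show N - 1 - (i : ℕ) ≤ N - (i : ℕ) by omega), hmid]

lemma fderiv_mulVec_vpow_apply {n a N : ℕ} (M : Matrix (Fin a) (Fin (n ^ N)) ℝ)
    (x w : Fin n → ℝ) :
    fderiv ℝ (fun y => M.mulVec (vpow y N)) x w = M.mulVec (Lv x N w) := by
  have h : HasFDerivAt (fun y => M.mulVec (vpow y N))
      ((LinearMap.toContinuousLinearMap (Matrix.mulVecLin M)).comp (Lv x N)) x :=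
    (LinearMap.toContinuousLinearMap (Matrix.mulVecLin M)).hasFDerivAt.comp x
      (hasFDerivAt_vpow x N)
  rw [h.fderiv]
  rfl

lemma lieD_mulVec_lin {n a : ℕ} (C : Matrix (Fin a) (Fin n) ℝ)
    (f : (Fin n → ℝ) → (Fin n → ℝ)) (x : Fin n → ℝ) :
    lieD f (fun y => C.mulVec y) x = C.mulVec (f x) := by
  have h : HasFDerivAt (fun y : Fin n → ℝ => C.mulVec y)
      (LinearMap.toContinuousLinearMap (Matrix.mulVecLin C)) x :=
    (LinearMap.toContinuousLinearMap (Matrix.mulVecLin C)).hasFDerivAt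
  rw [lieD, h.fderiv]
  rfl

lemma sum_k_ge (k : ℕ → ℕ) (hk : ∀ i, 2 ≤ k i) (p : ℕ) :
    2 * p ≤ ∑ t ∈ Finset.range p, k t := by
  calc 2 * p = ∑ _t ∈ Finset.range p, 2 := by rw [Finset.sum_const, Finset.card_range]; ring
  _ ≤ ∑ t ∈ Finset.range p, k t := Finset.sum_le_sum fun i _ => hk i

theorem mixed_lie_derivative_chain' (n m : ℕ) (k : ℕ → ℕ) (hk : ∀ i, 2 ≤ k i)
    (A : (i : ℕ) → Matrix (Fin n) (Fin (n ^ (k i - 1))) ℝ)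
    (C : Matrix (Fin m) (Fin n) ℝ) (p : ℕ) (x : Fin n → ℝ) :
    mLieN (fun p y => (A p).mulVec (vpow y (k p - 1))) (fun y => C.mulVec y) (p + 1) x =
      (C * A 0 * Mchain k hk A p).mulVec
        (vpow x ((∑ t ∈ Finset.range (p + 1), k t) - (2 * (p + 1) - 1))) := by
  induction p generalizing x with
  | zero =>
    show lieD _ (fun y => C.mulVec y) x = _
    rw [lieD_mulVec_lin, Matrix.mulVec_mulVec]
    have hM : Mchain k hk A 0 = castM rfl (by congr 1)
        (1 : Matrix (Fin (n ^ (k 0 - 1))) (Fin (n ^ (k 0 - 1))) ℝ) := rfl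
    rw [hM, mul_castM, castM_mulVec, Matrix.mul_one, castV_rfl,
      vpow_cast x (by rw [Finset.sum_range_one]) _]
  | succ p ih =>
    show lieD _ (mLieN _ _ (p + 1)) x = _
    have hfun : mLieN (fun p y => (A p).mulVec (vpow y (k p - 1)))
        (fun y => C.mulVec y) (p + 1) =
        fun z => (C * A 0 * Mchain k hk A p).mulVec
          (vpow z ((∑ t ∈ Finset.range (p + 1), k t) - (2 * (p + 1) - 1))) :=
      funext fun z => ih z
    rw [lieD, hfun, fderiv_mulVec_vpow_apply, ← Bmat_mulVec x (k (p + 1)) _ (hk (p + 1)) (A (p + 1)),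
      Matrix.mulVec_mulVec]
    have hMc : Mchain k hk A (p + 1) = castM rfl (by
        have h2 : (∑ t ∈ Finset.range (p + 1 + 1), k t) =
            (∑ t ∈ Finset.range (p + 1), k t) + k (p + 1) :=
          Finset.sum_range_succ k (p + 1)
        have h3 := sum_k_ge k hk (p + 1)
        have h4 := hk (p + 1)
        congr 1
        omega)
        (Mchain k hk A p *
          Bmat (k (p + 1)) ((∑ t ∈ Finset.range (p + 1), k t) - (2 * (p + 1) - 1))
            (hk (p + 1)) (A (p + 1))) := rfl
    rw [hMc, mul_castM, castM_mulVec, castV_rfl, Matrix.mul_assoc,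
      vpow_cast x (show (∑ t ∈ Finset.range (p + 1 + 1), k t) - (2 * (p + 1 + 1) - 1) =
          (∑ t ∈ Finset.range (p + 1), k t) - (2 * (p + 1) - 1) + k (p + 1) - 2 from by
        have h2 : (∑ t ∈ Finset.range (p + 1 + 1), k t) =
            (∑ t ∈ Finset.range (p + 1), k t) + k (p + 1) := Finset.sum_range_succ k (p + 1)
        have h3 := sum_k_ge k hk (p + 1)
        have h4 := hk (p + 1)
        omega) _]

/-- For `j ≥ 2`, vector fields `f_{k_i}(x) = A_{k_i} x^{[k_i-1]}` with
`k_i ≥ 2` (0-based: `k 0 = k₁`, …, `k (j-1) = k_j`) and `g(x) = C x`,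
`L_{f_{k_j}} ⋯ L_{f_{k₂}} L_{f_{k₁}} g(x) =
  C A_{k₁} B_{k₂k₁} B_{k₃k₂k₁} ⋯ B_{k_j⋯k₂k₁} x^{[k₁+⋯+k_j-(2j-1)]}`,
where `B_{k_p⋯k₂k₁} = Σ_{i=1}^{N_p} I ⊗ ⋯ ⊗ A_{k_p} ⊗ ⋯ ⊗ I` with
`N_p = k₁+⋯+k_{p-1} - (2p-3)`. -/
theorem mixed_lie_derivative_chain (n m j : ℕ) (hj : 2 ≤ j) (k : ℕ → ℕ) (hk : ∀ i, 2 ≤ k i)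
    (A : (i : ℕ) → Matrix (Fin n) (Fin (n ^ (k i - 1))) ℝ)
    (C : Matrix (Fin m) (Fin n) ℝ) (x : Fin n → ℝ) :
    mLieN (fun p y => (A p).mulVec (vpow y (k p - 1))) (fun y => C.mulVec y) j x =
      (C * A 0 *
          castM rfl (by have hjj : j - 1 + 1 = j := Nat.sub_add_cancel (by omega); rw [hjj])
            (Mchain k hk A (j - 1))).mulVec
        (vpow x ((∑ t ∈ Finset.range j, k t) - (2 * j - 1))) := by
  obtain ⟨q, rfl⟩ : ∃ q, j = q + 1 := ⟨j - 1, by omega⟩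
  exact mixed_lie_derivative_chain' n m k hk A C q x

end
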